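/- Let p, q satisfy conditions (C₁) and (C₃), and suppose y ∈ C[0,1] ∩ C²(0,1] solves −(p(x)y′(x))′ = q(x) f(x,y(x)) on (0,1) with lim_{x→0⁺} p(x)y′(x) = 0 and α₂ y(1) + β₂ y′(1) = γ₂ (α₂ ≠ 0), where f is continuous and bounded along the solution. Then y satisfies y(x) = γ₂/α₂ + ∫₀¹ G(x,s) q(s) f(s,y(s)) ds, where G(x,s) = h(1) − h(max(x,s)) + (β₂/(α₂ p(1))), with h(x) = ∫₀ˣ dt/p(t). -/

import Mathlib

open MeasureTheory Filter

/-- product of a bounded function continuous on `Ioc 0 1` with an interval integrable function -/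
lemma helper_mul_intInt {φ F : ℝ → ℝ} {M : ℝ}
    (hφ : ContinuousOn φ (Set.Ioc 0 1))
    (hM : ∀ s ∈ Set.Ioc (0:ℝ) 1, |φ s| ≤ M)
    (hF : IntervalIntegrable F volume 0 1)
    (hFm : AEStronglyMeasurable F (volume.restrict (Set.Ioc 0 1))) :
    IntervalIntegrable (fun s => φ s * F s) volume 0 1 := by
  apply (hF.const_mul M).mono_fun
  · rw [Set.uIoc_of_le (zero_le_one)]
    exact (hφ.aestronglyMeasurable measurableSet_Ioc).mul hFm
  · rw [Set.uIoc_of_le (zero_le_one)]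
    refine (ae_restrict_mem measurableSet_Ioc).mono fun s hs => ?_
    simp only [Real.norm_eq_abs, abs_mul]
    exact mul_le_mul_of_nonneg_right ((hM s hs).trans (le_abs_self M)) (abs_nonneg _)

theorem solution_satisfies_fredholm_neumann_robin
    (p q : ℝ → ℝ) (f : ℝ → ℝ → ℝ) (y : ℝ → ℝ)
    (α₂ β₂ γ₂ : ℝ) (h : ℝ → ℝ)
    -- (C₁)
    (hpC : ContinuousOn p (Set.Icc 0 1))
    (hpd : ∀ x ∈ Set.Ioc (0:ℝ) 1, DifferentiableAt ℝ p x)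
    (hpp : ∀ x ∈ Set.Ioc (0:ℝ) 1, 0 < p x)
    (hqp : ∀ x ∈ Set.Ioc (0:ℝ) 1, 0 < q x)
    (hqc : ContinuousOn q (Set.Ioc 0 1))
    -- (C₃)
    (hq1 : IntervalIntegrable q volume 0 1)
    (hdouble : IntervalIntegrable
      (fun x => (1 / p x) * ∫ s in (0:ℝ)..x, q s) volume 0 1)
    -- h well-defined
    (hintp : IntervalIntegrable (fun t => 1 / p t) volume 0 1)
    (hh : ∀ x, h x = ∫ t in (0:ℝ)..x, 1 / p t)
    (hα : α₂ ≠ 0)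
    -- f continuous and bounded along the solution
    (hfc : ContinuousOn (fun x => f x (y x)) (Set.Ioc 0 1))
    (hfb : ∃ C : ℝ, ∀ x ∈ Set.Ioc (0:ℝ) 1, |f x (y x)| ≤ C)
    -- y solves the singular BVP
    (hyc : ContinuousOn y (Set.Icc 0 1))
    (hyd : ∀ x ∈ Set.Ioc (0:ℝ) 1, DifferentiableAt ℝ y x)
    (hode : ∀ x ∈ Set.Ioo (0:ℝ) 1,
      HasDerivAt (fun t => p t * deriv y t) (-(q x * f x (y x))) x)
    (hbc0 : Tendsto (fun x => p x * deriv y x) (nhdsWithin 0 (Set.Ioi 0)) (nhds 0))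
    (hbc1 : α₂ * y 1 + β₂ * deriv y 1 = γ₂) :
    ∀ x ∈ Set.Icc (0:ℝ) 1,
      y x = γ₂ / α₂ +
        ∫ s in (0:ℝ)..1,
          (h 1 - h (max x s) + β₂ / (α₂ * p 1)) * q s * f s (y s) := by
  obtain ⟨C, hC⟩ := hfb
  set F : ℝ → ℝ := fun s => q s * f s (y s) with hFdef
  set Q : ℝ → ℝ := fun x => ∫ s in (0:ℝ)..x, F s with hQdef
  set c : ℝ := β₂ / (α₂ * p 1) with hcdef
  have hp1 : 0 < p 1 := hpp 1 ⟨zero_lt_one, le_rfl⟩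
  have hp1' : p 1 ≠ 0 := ne_of_gt hp1
  -- continuity of F
  have hFcont : ContinuousOn F (Set.Ioc 0 1) := hqc.mul hfc
  have hFmeas : AEStronglyMeasurable F (volume.restrict (Set.Ioc 0 1)) :=
    hFcont.aestronglyMeasurable measurableSet_Ioc
  -- integrability of F
  have hFint : IntervalIntegrable F volume 0 1 := by
    apply (hq1.const_mul C).mono_fun
    · rw [Set.uIoc_of_le (zero_le_one)]; exact hFmeas
    · rw [Set.uIoc_of_le (zero_le_one)]
      refine (ae_restrict_mem measurableSet_Ioc).mono fun s hs => ?_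
      simp only [Real.norm_eq_abs, abs_mul, hFdef]
      calc |q s| * |f s (y s)| ≤ |q s| * C :=
            mul_le_mul_of_nonneg_left (hC s hs) (abs_nonneg _)
        _ ≤ |C| * |q s| := by
            rw [mul_comm]
            exact mul_le_mul_of_nonneg_right (le_abs_self C) (abs_nonneg _)
  have hFsub : ∀ a b : ℝ, a ∈ Set.Icc (0:ℝ) 1 → b ∈ Set.Icc (0:ℝ) 1 →
      IntervalIntegrable F volume a b := by
    intro a b ha hb
    refine hFint.mono_set (Set.uIcc_subset_uIcc ?_ ?_) <;>
      rw [Set.uIcc_of_le (zero_le_one)] <;> assumption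
  -- continuity of Q
  have hFIccInt : IntegrableOn F (Set.Icc 0 1) volume :=
    (intervalIntegrable_iff_integrableOn_Icc_of_le zero_le_one).1 hFint
  have hQcont : ContinuousOn Q (Set.Icc 0 1) := by
    have := intervalIntegral.continuousOn_primitive_interval
      (a := (0:ℝ)) (b := (1:ℝ)) (f := F) (μ := volume)
      (by rwa [Set.uIcc_of_le zero_le_one])
    rwa [Set.uIcc_of_le zero_le_one] at this
  -- replace h by its formula
  have hfun : h = fun x => ∫ t in (0:ℝ)..x, 1 / p t := funext hh
  subst hfun
  -- continuity of h
  have hinvIccInt : IntegrableOn (fun t => 1 / p t) (Set.Icc 0 1) volume :=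
    (intervalIntegrable_iff_integrableOn_Icc_of_le zero_le_one).1 hintp
  have hhcont : ContinuousOn (fun x => ∫ t in (0:ℝ)..x, 1 / p t) (Set.Icc 0 1) := by
    have := intervalIntegral.continuousOn_primitive_interval
      (a := (0:ℝ)) (b := (1:ℝ)) (f := fun t => 1 / p t) (μ := volume)
      (by rwa [Set.uIcc_of_le zero_le_one])
    rwa [Set.uIcc_of_le zero_le_one] at this
  set h : ℝ → ℝ := fun x => ∫ t in (0:ℝ)..x, 1 / p t with hhdef
  -- bound for h 1 - h t
  obtain ⟨M, hM⟩ : ∃ M, ∀ t ∈ Set.Icc (0:ℝ) 1, |h 1 - h t| ≤ M := by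
    obtain ⟨M, hM⟩ := isCompact_Icc.exists_bound_of_continuousOn
      (continuousOn_const.sub hhcont)
    exact ⟨M, fun t ht => by simpa using hM t ht⟩
  -- integrability of the kernels
  have hG2cont : ContinuousOn (fun s => (h 1 - h s) * F s) (Set.Ioc 0 1) :=
    ((continuousOn_const.sub (hhcont.mono Set.Ioc_subset_Icc_self)).mul hFcont)
  have hG2int : IntervalIntegrable (fun s => (h 1 - h s) * F s) volume 0 1 :=
    helper_mul_intInt (continuousOn_const.sub (hhcont.mono Set.Ioc_subset_Icc_self))
      (fun s hs => hM s (Set.Ioc_subset_Icc_self hs)) hFint hFmeas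
  have hmaxcont : ∀ x ∈ Set.Icc (0:ℝ) 1,
      ContinuousOn (fun s => h 1 - h (max x s)) (Set.Ioc 0 1) := by
    intro x hx
    refine continuousOn_const.sub (hhcont.comp
      ((continuous_const.max continuous_id).continuousOn) ?_)
    intro s hs
    exact ⟨le_trans hx.1 (le_max_left _ _), max_le hx.2 hs.2⟩
  have hmaxint : ∀ x ∈ Set.Icc (0:ℝ) 1,
      IntervalIntegrable (fun s => (h 1 - h (max x s)) * F s) volume 0 1 := by
    intro x hx
    refine helper_mul_intInt (M := M) (hmaxcont x hx) (fun s hs => ?_) hFint hFmeas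
    exact hM _ ⟨le_trans hx.1 (le_max_left _ _), max_le hx.2 hs.2⟩
  -- the function g
  set g : ℝ → ℝ := fun x => (h 1 - h x) * Q x + ∫ s in x..1, (h 1 - h s) * F s with hgdef
  have hgcont : ContinuousOn g (Set.Icc 0 1) := by
    refine ((continuousOn_const.sub hhcont).mul hQcont).add ?_
    have := intervalIntegral.continuousOn_primitive_interval_left
      (a := (0:ℝ)) (b := (1:ℝ)) (f := fun s => (h 1 - h s) * F s) (μ := volume)
      (by rw [Set.uIcc_of_le zero_le_one]
          exact (intervalIntegrable_iff_integrableOn_Icc_of_le zero_le_one).1 hG2int)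
    rwa [Set.uIcc_of_le zero_le_one] at this
  -- split lemma
  have hsplit : ∀ x ∈ Set.Icc (0:ℝ) 1,
      (∫ s in (0:ℝ)..1, (h 1 - h (max x s)) * F s) = g x := by
    intro x hx
    have hx1 : IntervalIntegrable (fun s => (h 1 - h (max x s)) * F s) volume 0 x := by
      refine (hmaxint x hx).mono_set (Set.uIcc_subset_uIcc ?_ ?_) <;>
        rw [Set.uIcc_of_le zero_le_one]
      · exact Set.left_mem_Icc.2 zero_le_one
      · exact hx
    have hx2 : IntervalIntegrable (fun s => (h 1 - h (max x s)) * F s) volume x 1 := by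
      refine (hmaxint x hx).mono_set (Set.uIcc_subset_uIcc ?_ ?_) <;>
        rw [Set.uIcc_of_le zero_le_one]
      · exact hx
      · exact Set.right_mem_Icc.2 zero_le_one
    rw [← intervalIntegral.integral_add_adjacent_intervals hx1 hx2, hgdef]
    congr 1
    · have : (∫ s in (0:ℝ)..x, (h 1 - h (max x s)) * F s)
          = ∫ s in (0:ℝ)..x, (h 1 - h x) * F s := by
        refine intervalIntegral.integral_congr fun s hs => ?_
        rw [Set.uIcc_of_le hx.1] at hs
        rw [max_eq_left hs.2]
      rw [this, intervalIntegral.integral_const_mul]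
    · refine intervalIntegral.integral_congr fun s hs => ?_
      rw [Set.uIcc_of_le hx.2] at hs
      rw [max_eq_right hs.1]
  -- derivative of Q on Ioo 0 1
  have hFcontIoo : ContinuousOn F (Set.Ioo 0 1) := hFcont.mono Set.Ioo_subset_Ioc_self
  have hQderiv : ∀ u ∈ Set.Ioo (0:ℝ) 1, HasDerivAt Q (F u) u := by
    intro u hu
    refine intervalIntegral.integral_hasDerivAt_right
      (hFsub 0 u (Set.left_mem_Icc.2 zero_le_one) ⟨hu.1.le, hu.2.le⟩)
      (hFcontIoo.stronglyMeasurableAtFilter isOpen_Ioo u hu) ?_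
    exact (hFcont u (Set.Ioo_subset_Ioc_self hu)).continuousAt
      (Ioc_mem_nhds hu.1 hu.2)
  -- p x * y' x = - Q x on Ioo 0 1
  have hw : ∀ t ∈ Set.Ioo (0:ℝ) 1, p t * deriv y t = -Q t := by
    intro t ht
    have key : ∀ ε ∈ Set.Ioo (0:ℝ) t,
        p ε * deriv y ε + Q ε = p t * deriv y t + Q t := by
      intro ε hε
      have hsub : Set.uIcc ε t ⊆ Set.Ioo (0:ℝ) 1 := by
        rw [Set.uIcc_of_le hε.2.le]
        intro u hu
        exact ⟨lt_of_lt_of_le hε.1 hu.1, lt_of_le_of_lt hu.2 ht.2⟩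
      have hder : ∀ u ∈ Set.uIcc ε t,
          HasDerivAt (fun u => p u * deriv y u + Q u) 0 u := by
        intro u hu
        have h1 := hode u (hsub hu)
        have h2 := hQderiv u (hsub hu)
        have := h1.add h2
        have e : -(q u * f u (y u)) + F u = 0 := by simp [hFdef]
        rw [e] at this
        exact this
      have := intervalIntegral.integral_eq_sub_of_hasDerivAt hder
        (intervalIntegrable_const (c := (0:ℝ)))
      simp only [intervalIntegral.integral_zero] at this
      linarith [this]
    have hQ0 : Tendsto Q (nhdsWithin 0 (Set.Ioi 0)) (nhds 0) := by
      have h0 : Q 0 = 0 := intervalIntegral.integral_same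
      have := (hQcont 0 (Set.left_mem_Icc.2 zero_le_one))
      rw [ContinuousWithinAt, h0] at this
      have heq : nhdsWithin (0:ℝ) (Set.Ioi 0) = nhdsWithin 0 (Set.Ioc 0 1) :=
        (nhdsWithin_Ioc_eq_nhdsGT zero_lt_one).symm
      rw [heq]
      exact this.mono_left (nhdsWithin_mono _ Set.Ioc_subset_Icc_self)
    have hlim : Tendsto (fun ε => p ε * deriv y ε + Q ε)
        (nhdsWithin 0 (Set.Ioi 0)) (nhds 0) := by
      simpa using hbc0.add hQ0
    have hev : (fun ε => p ε * deriv y ε + Q ε)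
        =ᶠ[nhdsWithin 0 (Set.Ioi 0)] fun _ => p t * deriv y t + Q t := by
      filter_upwards [Ioo_mem_nhdsGT_of_mem ⟨le_refl (0:ℝ), ht.1⟩] with ε hε
      exact key ε hε
    have h2 : Tendsto (fun _ : ℝ => p t * deriv y t + Q t)
        (nhdsWithin 0 (Set.Ioi 0)) (nhds 0) := hlim.congr' hev
    have := tendsto_nhds_unique h2 tendsto_const_nhds
    linarith
  -- derivative of y on Ioo 0 1
  have hyderiv : ∀ t ∈ Set.Ioo (0:ℝ) 1, HasDerivAt y (-Q t / p t) t := by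
    intro t ht
    have hpt : p t ≠ 0 := ne_of_gt (hpp t ⟨ht.1, ht.2.le⟩)
    have hd := (hyd t ⟨ht.1, ht.2.le⟩).hasDerivAt
    have : deriv y t = -Q t / p t := by
      field_simp
      linarith [hw t ht]
    rwa [this] at hd
  -- derivative of the inverse-p primitive
  have hinvcontIoo : ContinuousOn (fun t => 1 / p t) (Set.Ioo 0 1) := by
    refine continuousOn_const.div (hpC.mono (Set.Ioo_subset_Icc_self)) ?_
    exact fun u hu => ne_of_gt (hpp u (Set.Ioo_subset_Ioc_self hu))
  have hhderiv : ∀ t ∈ Set.Ioo (0:ℝ) 1, HasDerivAt h (1 / p t) t := by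
    intro t ht
    refine intervalIntegral.integral_hasDerivAt_right
      (hintp.mono_set (Set.uIcc_subset_uIcc ?_ ?_))
      (hinvcontIoo.stronglyMeasurableAtFilter isOpen_Ioo t ht) ?_
    · rw [Set.uIcc_of_le zero_le_one]; exact Set.left_mem_Icc.2 zero_le_one
    · rw [Set.uIcc_of_le zero_le_one]; exact ⟨ht.1.le, ht.2.le⟩
    · exact (hinvcontIoo t ht).continuousAt (Ioo_mem_nhds ht.1 ht.2)
  -- derivative of g on Ioo 0 1
  have hG2contIoo : ContinuousOn (fun s => (h 1 - h s) * F s) (Set.Ioo 0 1) :=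
    hG2cont.mono Set.Ioo_subset_Ioc_self
  have hgderiv : ∀ t ∈ Set.Ioo (0:ℝ) 1, HasDerivAt g (-Q t / p t) t := by
    intro t ht
    have hA : HasDerivAt (fun x => h 1 - h x) (0 - 1 / p t) t :=
      (hasDerivAt_const t (h 1)).sub (hhderiv t ht)
    have hB := hQderiv t ht
    have h1 : HasDerivAt (fun x => (h 1 - h x) * Q x)
        ((0 - 1 / p t) * Q t + (h 1 - h t) * F t) t := hA.mul hB
    have h2 : HasDerivAt (fun x => ∫ s in x..1, (h 1 - h s) * F s)
        (-((h 1 - h t) * F t)) t := by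
      refine intervalIntegral.integral_hasDerivAt_left
        (hG2int.mono_set (Set.uIcc_subset_uIcc ?_ ?_))
        (hG2contIoo.stronglyMeasurableAtFilter isOpen_Ioo t ht) ?_
      · rw [Set.uIcc_of_le zero_le_one]; exact ⟨ht.1.le, ht.2.le⟩
      · rw [Set.uIcc_of_le zero_le_one]; exact Set.right_mem_Icc.2 zero_le_one
      · exact (hG2contIoo t ht).continuousAt (Ioo_mem_nhds ht.1 ht.2)
    have := h1.add h2
    have heq : (0 - 1 / p t) * Q t + (h 1 - h t) * F t + -((h 1 - h t) * F t)
        = -Q t / p t := by ring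
    rwa [heq] at this
  -- key identity on Ioc 0 1
  have hg1 : g 1 = 0 := by
    simp [hgdef]
  have hkey : ∀ x ∈ Set.Ioc (0:ℝ) 1, y x = y 1 + g x := by
    intro x hx
    have hcontΨ : ContinuousOn (fun u => y u - g u) (Set.Icc x 1) :=
      (hyc.mono (Set.Icc_subset_Icc hx.1.le le_rfl)).sub
        (hgcont.mono (Set.Icc_subset_Icc hx.1.le le_rfl))
    have hder : ∀ u ∈ Set.Ioo x 1,
        HasDerivWithinAt (fun u => y u - g u) ((fun _ => (0:ℝ)) u) (Set.Ioi u) u := by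
      intro u hu
      have hu' : u ∈ Set.Ioo (0:ℝ) 1 := ⟨lt_of_lt_of_le hx.1 hu.1.le, hu.2⟩
      have := (hyderiv u hu').sub (hgderiv u hu')
      rw [sub_self] at this
      exact this.hasDerivWithinAt
    have := intervalIntegral.integral_eq_sub_of_hasDeriv_right_of_le hx.2 hcontΨ hder
      (intervalIntegrable_const (c := (0:ℝ)))
    simp only [intervalIntegral.integral_zero] at this
    have h0 : y 1 - g 1 - (y x - g x) = 0 := by linarith
    rw [hg1] at h0
    linarith
  -- extend to x = 0
  have hkeyIcc : ∀ x ∈ Set.Icc (0:ℝ) 1, y x = y 1 + g x := by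
    intro x hx
    rcases eq_or_lt_of_le hx.1 with h0 | h0
    · subst h0
      have hne : (nhdsWithin (0:ℝ) (Set.Ioc 0 1)).NeBot := by
        rw [nhdsWithin_Ioc_eq_nhdsGT zero_lt_one]
        infer_instance
      have t1 : Tendsto (fun u => y u - g u) (nhdsWithin 0 (Set.Ioc 0 1))
          (nhds (y 0 - g 0)) := by
        have := ((hyc.sub hgcont) 0 (Set.left_mem_Icc.2 zero_le_one))
        exact this.mono_left (nhdsWithin_mono _ Set.Ioc_subset_Icc_self)
      have t2 : Tendsto (fun u => y u - g u) (nhdsWithin 0 (Set.Ioc 0 1))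
          (nhds (y 1)) := by
        have hconst : Tendsto (fun _ : ℝ => y 1) (nhdsWithin (0:ℝ) (Set.Ioc 0 1))
            (nhds (y 1)) := tendsto_const_nhds
        refine hconst.congr' ?_
        filter_upwards [self_mem_nhdsWithin] with u hu
        have := hkey u hu
        linarith
      have := tendsto_nhds_unique t1 t2
      linarith
    · exact hkey x ⟨h0, hx.2⟩
  -- compute deriv y 1
  have hmemIoc : Set.Ioc (0:ℝ) 1 ∈ nhdsWithin (1:ℝ) (Set.Iic 1) := by
    rw [mem_nhdsWithin]
    exact ⟨Set.Ioi 0, isOpen_Ioi, Set.mem_Ioi.2 zero_lt_one, fun u hu => ⟨hu.1, hu.2⟩⟩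
  have hmemIcc : Set.Icc (0:ℝ) 1 ∈ nhdsWithin (1:ℝ) (Set.Iic 1) := by
    rw [mem_nhdsWithin]
    exact ⟨Set.Ioi 0, isOpen_Ioi, Set.mem_Ioi.2 zero_lt_one, fun u hu => ⟨hu.1.le, hu.2⟩⟩
  have hinvcontIoc : ContinuousOn (fun t => 1 / p t) (Set.Ioc 0 1) := by
    refine continuousOn_const.div (hpC.mono (Set.Ioc_subset_Icc_self)) ?_
    exact fun u hu => ne_of_gt (hpp u hu)
  have hderiv1 : deriv y 1 = -Q 1 / p 1 := by
    have hhD : HasDerivWithinAt h (1 / p 1) (Set.Iic 1) 1 := by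
      refine intervalIntegral.integral_hasDerivWithinAt_right (t := Set.Iic 1) hintp
        ⟨Set.Ioc 0 1, hmemIoc, hinvcontIoc.aestronglyMeasurable measurableSet_Ioc⟩ ?_
      exact (hinvcontIoc 1 ⟨zero_lt_one, le_rfl⟩).mono_of_mem_nhdsWithin hmemIoc
    have hQD : HasDerivWithinAt Q (F 1) (Set.Iic 1) 1 := by
      refine intervalIntegral.integral_hasDerivWithinAt_right (t := Set.Iic 1) hFint
        ⟨Set.Ioc 0 1, hmemIoc, hFmeas⟩ ?_
      exact (hFcont 1 ⟨zero_lt_one, le_rfl⟩).mono_of_mem_nhdsWithin hmemIoc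
    have hgD2 : HasDerivWithinAt (fun x => ∫ s in x..1, (h 1 - h s) * F s)
        (-((h 1 - h 1) * F 1)) (Set.Iic 1) 1 := by
      refine intervalIntegral.integral_hasDerivWithinAt_left (t := Set.Iic 1)
        (hG2int.mono_set (Set.uIcc_subset_uIcc ?_ ?_))
        ⟨Set.Ioc 0 1, hmemIoc, hG2cont.aestronglyMeasurable measurableSet_Ioc⟩ ?_
      · rw [Set.uIcc_of_le zero_le_one]; exact Set.right_mem_Icc.2 zero_le_one
      · rw [Set.uIcc_of_le zero_le_one]; exact Set.right_mem_Icc.2 zero_le_one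
      exact (hG2cont 1 ⟨zero_lt_one, le_rfl⟩).mono_of_mem_nhdsWithin hmemIoc
    have hgD : HasDerivWithinAt g (-Q 1 / p 1) (Set.Iic 1) 1 := by
      have h1 : HasDerivWithinAt (fun x => (h 1 - h x) * Q x)
          ((0 - 1 / p 1) * Q 1 + (h 1 - h 1) * F 1) (Set.Iic 1) 1 :=
        ((hasDerivWithinAt_const 1 (Set.Iic 1) (h 1)).sub hhD).mul hQD
      have := h1.add hgD2
      have heq : (0 - 1 / p 1) * Q 1 + (h 1 - h 1) * F 1 + -((h 1 - h 1) * F 1)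
          = -Q 1 / p 1 := by ring
      rwa [heq] at this
    have hyD : HasDerivWithinAt y (-Q 1 / p 1) (Set.Ioc 0 1) 1 := by
      have hgD' : HasDerivWithinAt (fun x => y 1 + g x) (-Q 1 / p 1) (Set.Ioc 0 1) 1 := by
        have := (hasDerivWithinAt_const 1 (Set.Ioc (0:ℝ) 1) (y 1)).add
          (hgD.mono Set.Ioc_subset_Iic_self)
        rw [zero_add] at this
        exact this
      exact hgD'.congr (fun u hu => hkey u hu) (hkey 1 ⟨zero_lt_one, le_rfl⟩)
    have hyD2 : HasDerivWithinAt y (deriv y 1) (Set.Ioc 0 1) 1 :=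
      ((hyd 1 ⟨zero_lt_one, le_rfl⟩).hasDerivAt).hasDerivWithinAt
    exact (uniqueDiffOn_Ioc 0 1 1 ⟨zero_lt_one, le_rfl⟩).eq_deriv _ hyD2 hyD
  -- value of y 1
  have hy1 : y 1 = γ₂ / α₂ + c * Q 1 := by
    rw [hderiv1] at hbc1
    rw [hcdef]
    field_simp at hbc1 ⊢
    linear_combination hbc1
  -- conclusion
  intro x hx
  have hsplitInt : (∫ s in (0:ℝ)..1,
      (h 1 - h (max x s) + c) * q s * f s (y s)) = g x + c * Q 1 := by
    have step1 : (∫ s in (0:ℝ)..1, (h 1 - h (max x s) + c) * q s * f s (y s))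
        = ∫ s in (0:ℝ)..1, ((h 1 - h (max x s)) * F s + c * F s) := by
      refine intervalIntegral.integral_congr fun s _ => ?_
      simp only [hFdef]
      ring
    rw [step1, intervalIntegral.integral_add (hmaxint x hx) (hFint.const_mul c),
      intervalIntegral.integral_const_mul, hsplit x hx]
  rw [hkeyIcc x hx, hy1, hsplitInt]
  ring
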